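/- Let g be a finite-dimensional nilpotent real Lie algebra with symplectic form θ, let ∇ be the symplectic affine structure on g, let g̃ = g ⊕ ℝ be the one-dimensional central extension, let φ : g × g → ℝ be bilinear with φ(X,Y) − φ(Y,X) = θ(X,Y), and let α : g → ℝ be a linear form. Define the bilinear map ∇̃ on g̃ by ∇̃((X,a),(Y,b)) = (∇(X,Y), φ(X,Y) + a·α(Y) + b·α(X)) for all X, Y ∈ g and a, b ∈ ℝ (so that ∇̃((X,0),(0,1)) = ∇̃((0,1),(X,0)) = (0, α(X)) and ∇̃((0,1),(0,1)) = 0). Then ∇̃ is an affine structure on the Lie algebra g̃ if and only if both of the following hold for all X, Y, Z ∈ g: (i) α(∇(X,Y)) = α(X)·α(Y) (in particular α([X,Y]) = 0, so α is a one-dimensional linear representation of g); (ii) φ(X,∇(Y,Z)) − φ(Y,∇(X,Z)) − φ([X,Y],Z) = −α(X)·φ(Y,Z) + α(Y)·φ(X,Z) + α(Z)·θ(X,Y). -/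

import Mathlib

/-- (General case of the Theorem.)  With `∇` the symplectic affine structure on
a nilpotent symplectic Lie algebra `(g,θ)`, `φ` bilinear with `φ(X,Y) − φ(Y,X) = θ(X,Y)`, and
`α : g → ℝ` a linear form, the bilinear map
`∇̃((X,a),(Y,b)) = (∇(X,Y), φ(X,Y) + a·α(Y) + b·α(X))` on the central extension `g̃ = g ⊕ ℝ`
is an affine structure on `g̃` if and only if, for all `X, Y, Z ∈ g`:
(i) `α(∇(X,Y)) = α(X)·α(Y)` (in particular `α([X,Y]) = 0`, so `α` is a one-dimensional linear
representation of `g`), and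
(ii) `φ(X,∇(Y,Z)) − φ(Y,∇(X,Z)) − φ([X,Y],Z) = −α(X)·φ(Y,Z) + α(Y)·φ(X,Z) + α(Z)·θ(X,Y)`. -/
theorem general_representation_case
    (L : Type*) [LieRing L] [LieAlgebra ℝ L] [FiniteDimensional ℝ L]
    [LieRing.IsNilpotent L]
    (θ : L →ₗ[ℝ] L →ₗ[ℝ] ℝ)
    (halt : ∀ X : L, θ X X = 0)
    (hnondeg : ∀ X : L, (∀ Y : L, θ X Y = 0) → X = 0)
    (hcocycle : ∀ X Y Z : L, θ ⁅X, Y⁆ Z + θ ⁅Y, Z⁆ X + θ ⁅Z, X⁆ Y = 0)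
    (D : L →ₗ[ℝ] L →ₗ[ℝ] L)
    (hD : ∀ X Y Z : L, θ (D X Y) Z = -θ Y ⁅X, Z⁆)
    (φ : L →ₗ[ℝ] L →ₗ[ℝ] ℝ)
    (hφ : ∀ X Y : L, φ X Y - φ Y X = θ X Y)
    (α : L →ₗ[ℝ] ℝ)
    (Dt : (L × ℝ) →ₗ[ℝ] (L × ℝ) →ₗ[ℝ] (L × ℝ))
    (hDt : ∀ (X Y : L) (a b : ℝ), Dt (X, a) (Y, b) = (D X Y, φ X Y + a * α Y + b * α X)) :
    ((∀ U V : L × ℝ, Dt U V - Dt V U = (⁅U.1, V.1⁆, θ U.1 V.1)) ∧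
      (∀ U V W : L × ℝ,
        Dt U (Dt V W) - Dt V (Dt U W) = Dt (⁅U.1, V.1⁆, θ U.1 V.1) W)) ↔
      ((∀ X Y : L, α (D X Y) = α X * α Y ∧ α ⁅X, Y⁆ = 0) ∧
        (∀ X Y Z : L, φ X (D Y Z) - φ Y (D X Z) - φ ⁅X, Y⁆ Z =
          -(α X * φ Y Z) + α Y * φ X Z + α Z * θ X Y)) := by
  -- θ is antisymmetric
  have hθ : ∀ X Y : L, θ X Y = -θ Y X := by
    intro X Y
    have h := halt (X + Y)
    simp [map_add, halt] at h
    linarith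
  -- D X Y - D Y X = ⁅X, Y⁆
  have hDsym : ∀ X Y : L, D X Y - D Y X = ⁅X, Y⁆ := by
    intro X Y
    have key : ∀ Z : L, θ (D X Y - D Y X - ⁅X, Y⁆) Z = 0 := by
      intro Z
      have h1 := hD X Y Z
      have h2 := hD Y X Z
      have hc := hcocycle X Y Z
      have e1 := hθ Y ⁅X, Z⁆
      have e2 := hθ X ⁅Y, Z⁆
      have e3 : θ ⁅X, Z⁆ Y = -θ ⁅Z, X⁆ Y := by
        rw [← lie_skew X Z, map_neg, LinearMap.neg_apply]
      simp only [map_sub, LinearMap.sub_apply, h1, h2]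
      linarith
    exact sub_eq_zero.mp (hnondeg _ key)
  -- flatness of D
  have hDflat : ∀ X Y Z : L, D X (D Y Z) - D Y (D X Z) = D ⁅X, Y⁆ Z := by
    intro X Y Z
    have key : ∀ W : L, θ (D X (D Y Z) - D Y (D X Z) - D ⁅X, Y⁆ Z) W = 0 := by
      intro W
      have h1 : θ (D X (D Y Z)) W = θ Z ⁅Y, ⁅X, W⁆⁆ := by
        rw [hD, hD]; ring
      have h2 : θ (D Y (D X Z)) W = θ Z ⁅X, ⁅Y, W⁆⁆ := by
        rw [hD, hD]; ring
      have h3 : θ (D ⁅X, Y⁆ Z) W = -θ Z ⁅⁅X, Y⁆, W⁆ := hD _ _ _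
      have hjac : ⁅⁅X, Y⁆, W⁆ = ⁅X, ⁅Y, W⁆⁆ - ⁅Y, ⁅X, W⁆⁆ := by
        rw [lie_lie]
      have h4 : θ Z ⁅⁅X, Y⁆, W⁆ = θ Z ⁅X, ⁅Y, W⁆⁆ - θ Z ⁅Y, ⁅X, W⁆⁆ := by
        rw [hjac, map_sub]
      simp only [map_sub, LinearMap.sub_apply, h1, h2, h3]
      linarith
    exact sub_eq_zero.mp (hnondeg _ key)
  -- first (torsion) condition always holds
  have hA : ∀ U V : L × ℝ, Dt U V - Dt V U = (⁅U.1, V.1⁆, θ U.1 V.1) := by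
    rintro ⟨X, a⟩ ⟨Y, b⟩
    rw [hDt, hDt, Prod.mk_sub_mk]
    have := hφ X Y
    refine Prod.ext (hDsym X Y) ?_
    simp only
    linarith
  constructor
  · rintro ⟨-, h2⟩
    constructor
    · intro X Y
      have h := congrArg Prod.snd (h2 (0, 1) (X, 0) (Y, 0))
      rw [hDt, hDt, hDt, hDt, hDt] at h
      simp at h
      have hi : α (D X Y) = α X * α Y := by linarith
      refine ⟨hi, ?_⟩
      have h1 : α (D X Y) = α X * α Y := hi
      have h2' : α (D Y X) = α Y * α X := by
        have h := congrArg Prod.snd (h2 (0, 1) (Y, 0) (X, 0))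
        rw [hDt, hDt, hDt, hDt, hDt] at h
        simp at h
        linarith
      have hb : α ⁅X, Y⁆ = α (D X Y) - α (D Y X) := by
        rw [← hDsym X Y, map_sub]
      rw [hb, h1, h2']; ring
    · intro X Y Z
      have h := congrArg Prod.snd (h2 (X, 0) (Y, 0) (Z, 0))
      rw [hDt, hDt, hDt, hDt, hDt] at h
      simp at h
      linarith
  · rintro ⟨h1, h2⟩
    refine ⟨hA, ?_⟩
    rintro ⟨X, a⟩ ⟨Y, b⟩ ⟨Z, c⟩
    rw [hDt, hDt, hDt, hDt, hDt, Prod.mk_sub_mk]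
    refine Prod.ext (hDflat X Y Z) ?_
    simp only
    have e1 := (h1 Y Z).1
    have e2 := (h1 X Z).1
    have e3 := (h1 X Y).2
    have e4 := h2 X Y Z
    linear_combination e4 + a * e1 - b * e2 - c * e3
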